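/- With notation as in the degree-reduction transformation (x_v = 2x'_v / max_{i∈I_v}|V_i| and all rows of A having between 2 and Δ_I positive entries), if c is a nonnegative vector then c·x ≥ (2/Δ_I) (c·x'). Consequently, if x' is an α-approximate solution of the transformed max-min LP (whose constraints are the pairwise constraints and whose objectives are unchanged), then x is an (αΔ_I/2)-approximate solution of the original max-min LP. -/

import Mathlib

open Finset

/-- Degree-reduction transformation for max-min LPs: the scaled-back solution
`x_v = 2 x'_v / max_{i ∈ I_v} |V_i|` satisfies `c·x ≥ (2/Δ_I) (c·x')` for any
nonnegative `c`; consequently, if `x'` is an `α`-approximate solution of the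
transformed instance (pairwise constraints, unchanged objectives), then `x` is
a feasible `(α Δ_I / 2)`-approximate solution of the original instance. -/
theorem stmt_1 {K : Type*} [Fintype K] [Nonempty K] (m n Δ : ℕ) (α : ℝ)
    (A : Fin m → Fin n → ℝ) (C : K → Fin n → ℝ) (x' x : Fin n → ℝ)
    (hA : ∀ i v, 0 ≤ A i v) (hC : ∀ k v, 0 ≤ C k v)
    (hα : 0 < α)
    (hsupp : ∀ i, 2 ≤ (univ.filter (fun v => 0 < A i v)).card ∧
      (univ.filter (fun v => 0 < A i v)).card ≤ Δ)
    (hcover : ∀ v, ∃ i, 0 < A i v)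
    (hx'0 : ∀ v, 0 ≤ x' v)
    (hx'feas : ∀ i (u v : Fin n), u ≠ v → 0 < A i u → 0 < A i v →
      A i u * x' u + A i v * x' v ≤ 1)
    (hx : ∀ v, x v = 2 * x' v /
      (((univ.filter (fun i => 0 < A i v)).sup
        (fun i => (univ.filter (fun u => 0 < A i u)).card) : ℕ) : ℝ))
    (happrox : ∀ z : Fin n → ℝ, (∀ v, 0 ≤ z v) →
      (∀ i (u v : Fin n), u ≠ v → 0 < A i u → 0 < A i v →
        A i u * z u + A i v * z v ≤ 1) →
      univ.inf' univ_nonempty (fun k => ∑ v, C k v * z v) ≤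
        α * univ.inf' univ_nonempty (fun k => ∑ v, C k v * x' v)) :
    (∀ c : Fin n → ℝ, (∀ v, 0 ≤ c v) →
      (2 / (Δ : ℝ)) * ∑ v, c v * x' v ≤ ∑ v, c v * x v) ∧
    ((∀ v, 0 ≤ x v) ∧ (∀ i, ∑ v, A i v * x v ≤ 1)) ∧
    (∀ z : Fin n → ℝ, (∀ v, 0 ≤ z v) → (∀ i, ∑ v, A i v * z v ≤ 1) →
      univ.inf' univ_nonempty (fun k => ∑ v, C k v * z v) ≤
        (α * Δ / 2) * univ.inf' univ_nonempty (fun k => ∑ v, C k v * x v)) := by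

  set M : Fin n → ℕ := fun v => (univ.filter (fun i => 0 < A i v)).sup
      (fun i => (univ.filter (fun u => 0 < A i u)).card) with hMdef
  have hM2 : ∀ v, 2 ≤ M v := by
    intro v
    obtain ⟨i, hi⟩ := hcover v
    have hmem : i ∈ univ.filter (fun i => 0 < A i v) := by simp [hi]
    exact le_trans (hsupp i).1
      (Finset.le_sup (f := fun i => (univ.filter (fun u => 0 < A i u)).card) hmem)
  have hMΔ : ∀ v, (M v : ℝ) ≤ Δ := by
    intro v
    exact_mod_cast Finset.sup_le (fun i _ => (hsupp i).2)
  have hMpos : ∀ v, (0:ℝ) < M v := by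
    intro v
    have := hM2 v
    exact_mod_cast Nat.lt_of_lt_of_le (by norm_num) this
  have hx0 : ∀ v, 0 ≤ x v := by
    intro v
    rw [hx v]
    have := hx'0 v
    positivity
  have key1 : ∀ c : Fin n → ℝ, (∀ v, 0 ≤ c v) →
      (2 / (Δ : ℝ)) * ∑ v, c v * x' v ≤ ∑ v, c v * x v := by
    intro c hc
    rw [Finset.mul_sum]
    apply Finset.sum_le_sum
    intro v _
    rw [hx v]
    have hΔpos : (0:ℝ) < Δ := lt_of_lt_of_le (hMpos v) (hMΔ v)
    rw [show (2 / (Δ:ℝ)) * (c v * x' v) = c v * (2 * x' v / Δ) by ring]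
    have hxv := hx'0 v
    have hMvΔ : M v ≤ Δ := Finset.sup_le (fun i _ => (hsupp i).2)
    gcongr <;> first
      | exact hc v
      | positivity
      | exact hMpos v
  have feas : ∀ i, ∑ v, A i v * x v ≤ 1 := by
    intro i
    set V := univ.filter (fun v => 0 < A i v) with hV
    set d := V.card with hd
    have hd2 : 2 ≤ d := (hsupp i).1
    have hdpos : (0:ℝ) < d := by exact_mod_cast Nat.lt_of_lt_of_le (by norm_num) hd2
    have hrest : ∑ v, A i v * x v = ∑ v ∈ V, A i v * x v := by
      symm
      apply Finset.sum_subset (Finset.filter_subset _ _)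
      intro v _ hv
      have h0 : ¬ 0 < A i v := by simpa [hV] using hv
      have : A i v = 0 := le_antisymm (not_lt.1 h0) (hA i v)
      simp [this]
    set S := ∑ v ∈ V, A i v * x' v with hS
    have hSle : S ≤ (d:ℝ) / 2 := by
      have h1 : ∑ u ∈ V, ∑ v ∈ V.erase u, (A i u * x' u + A i v * x' v)
          ≤ ∑ u ∈ V, ∑ v ∈ V.erase u, (1:ℝ) := by
        apply Finset.sum_le_sum
        intro u hu
        apply Finset.sum_le_sum
        intro v hv
        have hvu : v ≠ u := Finset.ne_of_mem_erase hv
        exact hx'feas i u v hvu.symm (by simpa [hV] using hu)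
          (by simpa [hV] using Finset.mem_of_mem_erase hv)
      have hcard : ∀ u ∈ V, ((V.erase u).card : ℝ) = (d:ℝ) - 1 := by
        intro u hu
        rw [Finset.card_erase_of_mem hu]
        have : 1 ≤ d := le_trans (by norm_num) hd2
        push_cast [Nat.cast_sub (show 1 ≤ #V from this)]
        ring
      have hL : ∑ u ∈ V, ∑ v ∈ V.erase u, (A i u * x' u + A i v * x' v)
          = 2 * ((d:ℝ) - 1) * S := by
        have hterm : ∀ u ∈ V, ∑ v ∈ V.erase u, (A i u * x' u + A i v * x' v)
            = ((d:ℝ) - 1) * (A i u * x' u) + (S - A i u * x' u) := by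
          intro u hu
          rw [Finset.sum_add_distrib, Finset.sum_const, nsmul_eq_mul, hcard u hu,
            Finset.sum_erase_eq_sub hu]
        rw [Finset.sum_congr rfl hterm, Finset.sum_add_distrib, Finset.sum_sub_distrib,
          ← Finset.mul_sum, Finset.sum_const, nsmul_eq_mul]
        simp only [← hS, ← hd]
        ring
      have hR : ∑ u ∈ V, ∑ v ∈ V.erase u, (1:ℝ) = (d:ℝ) * ((d:ℝ) - 1) := by
        have : ∀ u ∈ V, ∑ v ∈ V.erase u, (1:ℝ) = (d:ℝ) - 1 := by
          intro u hu
          rw [Finset.sum_const, nsmul_eq_mul, hcard u hu, mul_one]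
        rw [Finset.sum_congr rfl this, Finset.sum_const, nsmul_eq_mul]
      rw [hL, hR] at h1
      have hd1 : (1:ℝ) < d := by exact_mod_cast Nat.lt_of_lt_of_le (by norm_num) hd2
      nlinarith
    have hMd : ∀ v ∈ V, (d:ℝ) ≤ M v := by
      intro v hv
      have hAv : 0 < A i v := by simpa [hV] using hv
      have hmem : i ∈ univ.filter (fun j => 0 < A j v) := by simp [hAv]
      exact_mod_cast Finset.le_sup (f := fun j => (univ.filter (fun u => 0 < A j u)).card) hmem
    calc ∑ v, A i v * x v = ∑ v ∈ V, A i v * x v := hrest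
      _ ≤ ∑ v ∈ V, A i v * (2 * x' v / d) := by
          apply Finset.sum_le_sum
          intro v hv
          rw [hx v]
          have hxv := hx'0 v
          gcongr <;> first
            | exact hA i v
            | positivity
            | exact hdpos
            | exact hMd v hv
            | exact_mod_cast hMd v hv
      _ = (2 / d) * S := by
          rw [hS, Finset.mul_sum]
          apply Finset.sum_congr rfl
          intro v _
          ring
      _ ≤ (2 / d) * ((d:ℝ) / 2) := by
          apply mul_le_mul_of_nonneg_left hSle
          positivity
      _ = 1 := by field_simp
  refine ⟨key1, ⟨hx0, feas⟩, ?_⟩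
  intro z hz0 hzfeas
  have hzpair : ∀ i (u v : Fin n), u ≠ v → 0 < A i u → 0 < A i v →
      A i u * z u + A i v * z v ≤ 1 := by
    intro i u v huv _ _
    calc A i u * z u + A i v * z v = ∑ w ∈ ({u, v} : Finset (Fin n)), A i w * z w := by
          rw [Finset.sum_pair huv]
      _ ≤ ∑ w, A i w * z w := Finset.sum_le_sum_of_subset_of_nonneg (Finset.subset_univ _)
          (fun w _ _ => mul_nonneg (hA i w) (hz0 w))
      _ ≤ 1 := hzfeas i
  have h1 := happrox z hz0 hzpair
  rcases Nat.eq_zero_or_pos n with hn | hn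
  · subst hn
    simp_all [Finset.inf'_const]
  · have hΔpos : (0:ℝ) < Δ := by
      obtain ⟨v⟩ := Fin.pos_iff_nonempty.mp hn
      exact lt_of_lt_of_le (hMpos v) (hMΔ v)
    obtain ⟨k0, hk0, hmin⟩ := Finset.exists_mem_eq_inf' (univ_nonempty (α := K))
      (fun k => ∑ v, C k v * x v)
    have hstep : ∑ v, C k0 v * x' v ≤ ((Δ:ℝ) / 2) * ∑ v, C k0 v * x v := by
      have h := key1 (C k0) (hC k0)
      have h2 := mul_le_mul_of_nonneg_left h (by positivity : (0:ℝ) ≤ (Δ:ℝ)/2)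
      calc ∑ v, C k0 v * x' v = ((Δ:ℝ)/2) * ((2/(Δ:ℝ)) * ∑ v, C k0 v * x' v) := by
            field_simp
        _ ≤ ((Δ:ℝ)/2) * ∑ v, C k0 v * x v := h2
    calc univ.inf' univ_nonempty (fun k => ∑ v, C k v * z v)
        ≤ α * univ.inf' univ_nonempty (fun k => ∑ v, C k v * x' v) := h1
      _ ≤ α * (((Δ:ℝ)/2) * univ.inf' univ_nonempty (fun k => ∑ v, C k v * x v)) := by
          apply mul_le_mul_of_nonneg_left _ hα.le
          rw [hmin]
          exact le_trans (Finset.inf'_le _ hk0) hstep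
      _ = (α * Δ / 2) * univ.inf' univ_nonempty (fun k => ∑ v, C k v * x v) := by ring
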